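/- Let r : ℤ → ℝ satisfy ∑_{k∈ℤ}(1+|k|)|r(k)| < ∞ and let f(ω) = (2π)^{-1}∑_{k∈ℤ} r(k)e^{-ιkω}. Then there exists a constant C > 0 such that for all n ≥ 1 and all ω₁, ω₂ ∈ ℝ, |∑_{t=1}^{n}∑_{s=1}^{n} r(t−s)·e^{-ι(tω₁ + sω₂)} − 2π·H_n^F(ω₁+ω₂)·f(ω₁)| ≤ C. (The double sum equals the joint cumulant cu(d_n(ω₁), d_n(ω₂)) of the discrete Fourier transforms d_n(ω) = ∑_{t=1}^{n} X_t e^{-ιtω} of a mean-zero stationary process with covariances r.) -/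

import Mathlib

open Complex Real

/-- The (complex form of the) spectral density `f(ω) = (2π)⁻¹ ∑_{k∈ℤ} r(k) e^{-ιkω}`. -/
noncomputable def specDensityC (r : ℤ → ℝ) (ω : ℝ) : ℂ :=
  (2 * (Real.pi : ℂ))⁻¹ * ∑' k : ℤ, (r k : ℂ) * Complex.exp (-(Complex.I * (k : ℂ) * (ω : ℂ)))

/-- The Fejér spectral window `H_n^F(ω) = ∑_{t=1}^n e^{-ιtω}`. -/
noncomputable def fejerWindow (n : ℕ) (ω : ℝ) : ℂ :=
  ∑ t ∈ Finset.Icc 1 n, Complex.exp (-(Complex.I * (t : ℂ) * (ω : ℂ)))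

set_option maxHeartbeats 1000000 in
/-- under A.1, the joint cumulant
`cu(d_n(ω₁), d_n(ω₂)) = ∑_{t,s=1}^n r(t-s) e^{-ι(tω₁ + sω₂)}` of discrete Fourier transforms
equals `2π H_n^F(ω₁+ω₂) f(ω₁)` up to an error bounded by a constant `C`, uniformly in
`n ≥ 1` and `ω₁, ω₂ ∈ ℝ`. -/
theorem dft_cumulant_approx (r : ℤ → ℝ) (heven : ∀ k : ℤ, r (-k) = r k)
    (hA1 : Summable fun k : ℤ => (1 + |(k : ℝ)|) * |r k|) :
    ∃ C : ℝ, 0 < C ∧ ∀ n : ℕ, 1 ≤ n → ∀ ω₁ ω₂ : ℝ,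
      ‖(∑ t ∈ Finset.Icc 1 n, ∑ s ∈ Finset.Icc 1 n,
            (r ((t : ℤ) - (s : ℤ)) : ℂ) *
              Complex.exp (-(Complex.I * ((t : ℂ) * (ω₁ : ℂ) + (s : ℂ) * (ω₂ : ℂ))))) -
          2 * (Real.pi : ℂ) * fejerWindow n (ω₁ + ω₂) * specDensityC r ω₁‖ ≤ C := by
  classical
  set C0 : ℝ := ∑' k : ℤ, (1 + |(k : ℝ)|) * |r k| with hC0def
  have hC0 : 0 ≤ C0 := tsum_nonneg fun k => by positivity
  refine ⟨C0 + 1, by linarith, ?_⟩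
  intro n hn ω₁ ω₂
  -- basic summabilities
  have habs : Summable fun k : ℤ => |r k| := by
    refine Summable.of_nonneg_of_le (fun k => abs_nonneg _) (fun k => ?_) hA1
    nlinarith [abs_nonneg (r k), abs_nonneg ((k : ℝ))]
  set g : ℤ → ℂ := fun k => (r k : ℂ) * Complex.exp (-(Complex.I * (k : ℂ) * (ω₁ : ℂ)))
    with hgdef
  have hnormg : ∀ k : ℤ, ‖g k‖ = |r k| := by
    intro k
    have he : -(Complex.I * (k : ℂ) * (ω₁ : ℂ)) = ((-((k : ℝ) * ω₁) : ℝ) : ℂ) * Complex.I := by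
      push_cast; ring
    rw [hgdef]
    simp only [norm_mul, Complex.norm_real, Real.norm_eq_abs, he,
      Complex.norm_exp_ofReal_mul_I, mul_one]
  have hgsum : Summable g := by
    refine Summable.of_norm ?_
    simpa only [hnormg] using habs
  -- the E factor
  set E : ℕ → ℂ := fun s => Complex.exp (-(Complex.I * (s : ℂ) * ((ω₁ : ℂ) + (ω₂ : ℂ))))
    with hEdef
  have hnormE : ∀ s : ℕ, ‖E s‖ = 1 := by
    intro s
    have he : -(Complex.I * (s : ℂ) * ((ω₁ : ℂ) + (ω₂ : ℂ)))
        = ((-((s : ℝ) * (ω₁ + ω₂)) : ℝ) : ℂ) * Complex.I := by push_cast; ring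
    rw [hEdef]
    simp only [he, Complex.norm_exp_ofReal_mul_I]
  -- rewrite the double sum
  have hdouble : (∑ t ∈ Finset.Icc 1 n, ∑ s ∈ Finset.Icc 1 n,
      (r ((t : ℤ) - (s : ℤ)) : ℂ) *
        Complex.exp (-(Complex.I * ((t : ℂ) * (ω₁ : ℂ) + (s : ℂ) * (ω₂ : ℂ)))))
      = ∑ s ∈ Finset.Icc 1 n,
          (∑ k ∈ Finset.Icc (1 - (s : ℤ)) ((n : ℤ) - (s : ℤ)), g k) * E s := by
    rw [Finset.sum_comm]
    refine Finset.sum_congr rfl fun s _ => ?_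
    have hstep : ∑ t ∈ Finset.Icc 1 n,
        (r ((t : ℤ) - (s : ℤ)) : ℂ) *
          Complex.exp (-(Complex.I * ((t : ℂ) * (ω₁ : ℂ) + (s : ℂ) * (ω₂ : ℂ))))
        = ∑ t ∈ Finset.Icc 1 n, g ((t : ℤ) - (s : ℤ)) * E s := by
      refine Finset.sum_congr rfl fun t _ => ?_
      simp only [hgdef, hEdef]
      rw [mul_assoc, ← Complex.exp_add]
      congr 2
      push_cast
      ring
    rw [hstep, ← Finset.sum_mul]
    congr 1
    refine Finset.sum_nbij' (fun t : ℕ => (t : ℤ) - (s : ℤ)) (fun k : ℤ => (k + s).toNat)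
      ?_ ?_ ?_ ?_ ?_
    · intro a ha
      simp only [Finset.mem_Icc] at ha ⊢
      omega
    · intro a ha
      simp only [Finset.mem_Icc] at ha ⊢
      omega
    · intro a ha
      simp only [Finset.mem_Icc] at ha
      show ((a : ℤ) - (s : ℤ) + (s : ℤ)).toNat = a
      omega
    · intro a ha
      simp only [Finset.mem_Icc] at ha
      show (((a + (s : ℤ)).toNat : ℕ) : ℤ) - (s : ℤ) = a
      omega
    · intro a _; rfl
  -- rewrite the main term
  have hmain : 2 * (Real.pi : ℂ) * fejerWindow n (ω₁ + ω₂) * specDensityC r ω₁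
      = ∑ s ∈ Finset.Icc 1 n, (∑' k : ℤ, g k) * E s := by
    have hpi : (2 * (Real.pi : ℂ)) * (2 * (Real.pi : ℂ))⁻¹ = 1 := by
      refine mul_inv_cancel₀ ?_
      simp [Complex.ofReal_ne_zero, Real.pi_ne_zero]
    have hfej : fejerWindow n (ω₁ + ω₂) = ∑ s ∈ Finset.Icc 1 n, E s := by
      unfold fejerWindow
      refine Finset.sum_congr rfl fun t _ => ?_
      simp [hEdef]
    rw [specDensityC, hfej, ← hgdef]
    calc (2 * (Real.pi : ℂ) * ∑ s ∈ Finset.Icc 1 n, E s) * ((2 * (Real.pi : ℂ))⁻¹ * ∑' k : ℤ, g k)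
        = (2 * (Real.pi : ℂ)) * (2 * (Real.pi : ℂ))⁻¹
            * ((∑' k : ℤ, g k) * ∑ s ∈ Finset.Icc 1 n, E s) := by ring
      _ = (∑' k : ℤ, g k) * ∑ s ∈ Finset.Icc 1 n, E s := by rw [hpi, one_mul]
      _ = ∑ s ∈ Finset.Icc 1 n, (∑' k : ℤ, g k) * E s := Finset.mul_sum _ _ _
  rw [hdouble, hmain, ← Finset.sum_sub_distrib]
  -- now bound the sum of tails
  have hsplit : ∀ s ∈ Finset.Icc 1 n,
      ‖(∑ k ∈ Finset.Icc (1 - (s : ℤ)) ((n : ℤ) - (s : ℤ)), g k) * E s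
        - (∑' k : ℤ, g k) * E s‖
      ≤ ∑' k : ℤ, (if k ∈ Finset.Icc (1 - (s : ℤ)) ((n : ℤ) - (s : ℤ)) then 0 else |r k|) := by
    intro s _
    set A : Finset ℤ := Finset.Icc (1 - (s : ℤ)) ((n : ℤ) - (s : ℤ)) with hA
    have htail : (∑ k ∈ A, g k) - (∑' k : ℤ, g k) = -(∑' k : ↑((↑A : Set ℤ)ᶜ), g ↑k) := by
      have h := Summable.sum_add_tsum_compl (s := A) hgsum
      rw [← h]
      ring
    rw [← sub_mul, htail, norm_mul, hnormE, mul_one, norm_neg]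
    have h1 : Summable fun k : ℤ => ‖g k‖ := by simpa only [hnormg] using habs
    have hsub : Summable fun k : ↑((↑A : Set ℤ)ᶜ) => ‖g ↑k‖ := h1.subtype _
    refine le_trans (norm_tsum_le_tsum_norm hsub) ?_
    have : ∑' k : ↑((↑A : Set ℤ)ᶜ), ‖g ↑k‖
        = ∑' k : ℤ, (if k ∈ A then 0 else |r k|) := by
      rw [tsum_subtype ((↑A : Set ℤ)ᶜ) (fun k => ‖g k‖)]
      refine tsum_congr fun k => ?_
      by_cases hk : k ∈ A
      · simp [Set.indicator_apply, hk]
      · simp [Set.indicator_apply, hk, hnormg]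
    rw [this]
  have hsummand : ∀ s : ℕ, Summable fun k : ℤ =>
      (if k ∈ Finset.Icc (1 - (s : ℤ)) ((n : ℤ) - (s : ℤ)) then 0 else |r k|) := by
    intro s
    refine Summable.of_nonneg_of_le (fun k => ?_) (fun k => ?_) habs
    · split <;> simp [abs_nonneg]
    · split <;> simp [abs_nonneg]
  have hcount : ∀ k : ℤ,
      (∑ s ∈ Finset.Icc 1 n,
        if k ∈ Finset.Icc (1 - (s : ℤ)) ((n : ℤ) - (s : ℤ)) then 0 else |r k|)
      ≤ |(k : ℝ)| * |r k| := by
    intro k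
    have hrw : (∑ s ∈ Finset.Icc 1 n,
        if k ∈ Finset.Icc (1 - (s : ℤ)) ((n : ℤ) - (s : ℤ)) then 0 else |r k|)
        = ((Finset.Icc 1 n).filter
            (fun s : ℕ => k ∉ Finset.Icc (1 - (s : ℤ)) ((n : ℤ) - (s : ℤ)))).card * |r k| := by
      calc (∑ s ∈ Finset.Icc 1 n,
          if k ∈ Finset.Icc (1 - (s : ℤ)) ((n : ℤ) - (s : ℤ)) then 0 else |r k|)
          = ∑ s ∈ (Finset.Icc 1 n).filter
              (fun s : ℕ => k ∉ Finset.Icc (1 - (s : ℤ)) ((n : ℤ) - (s : ℤ))), |r k| := by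
            rw [Finset.sum_filter]
            refine Finset.sum_congr rfl fun s _ => ?_
            by_cases h : k ∈ Finset.Icc (1 - (s : ℤ)) ((n : ℤ) - (s : ℤ)) <;> simp [h]
        _ = _ := by rw [Finset.sum_const]; simp [mul_comm]
    rw [hrw]
    have hcard : ((Finset.Icc 1 n).filter
        (fun s : ℕ => k ∉ Finset.Icc (1 - (s : ℤ)) ((n : ℤ) - (s : ℤ)))).card ≤ k.natAbs := by
      have := Finset.card_le_card_of_injOn
        (f := fun s : ℕ => if 0 ≤ k then n - s else s - 1)
        (s := (Finset.Icc 1 n).filter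
          (fun s : ℕ => k ∉ Finset.Icc (1 - (s : ℤ)) ((n : ℤ) - (s : ℤ))))
        (t := Finset.range k.natAbs) ?_ ?_
      · simpa using this
      · intro a ha
        simp only [Finset.mem_coe, Finset.mem_filter, Finset.mem_Icc, not_and, not_le, Finset.mem_range] at ha ⊢
        rcases ha with ⟨⟨h1, h2⟩, h3⟩
        split <;> omega
      · intro a ha b hb hab
        simp only [Finset.coe_filter, Set.mem_setOf_eq, Finset.mem_Icc] at ha hb
        dsimp only at hab
        split_ifs at hab <;> omega
    calc (((Finset.Icc 1 n).filter
          (fun s : ℕ => k ∉ Finset.Icc (1 - (s : ℤ)) ((n : ℤ) - (s : ℤ)))).card : ℝ) * |r k|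
        ≤ (k.natAbs : ℝ) * |r k| := by
          refine mul_le_mul_of_nonneg_right ?_ (abs_nonneg _)
          exact_mod_cast hcard
      _ = |(k : ℝ)| * |r k| := by
          congr 1
          rw [Nat.cast_natAbs, Int.cast_abs]
  calc ‖∑ s ∈ Finset.Icc 1 n,
        ((∑ k ∈ Finset.Icc (1 - (s : ℤ)) ((n : ℤ) - (s : ℤ)), g k) * E s
          - (∑' k : ℤ, g k) * E s)‖
      ≤ ∑ s ∈ Finset.Icc 1 n,
          ‖(∑ k ∈ Finset.Icc (1 - (s : ℤ)) ((n : ℤ) - (s : ℤ)), g k) * E s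
            - (∑' k : ℤ, g k) * E s‖ := norm_sum_le _ _
    _ ≤ ∑ s ∈ Finset.Icc 1 n,
          ∑' k : ℤ, (if k ∈ Finset.Icc (1 - (s : ℤ)) ((n : ℤ) - (s : ℤ)) then 0 else |r k|) :=
        Finset.sum_le_sum hsplit
    _ = ∑' k : ℤ, ∑ s ∈ Finset.Icc 1 n,
          (if k ∈ Finset.Icc (1 - (s : ℤ)) ((n : ℤ) - (s : ℤ)) then 0 else |r k|) :=
        (Summable.tsum_finsetSum (fun s _ => hsummand s)).symm
    _ ≤ ∑' k : ℤ, (1 + |(k : ℝ)|) * |r k| := by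
        refine Summable.tsum_le_tsum (fun k => ?_) ?_ hA1
        · refine le_trans (hcount k) ?_
          nlinarith [abs_nonneg (r k), abs_nonneg ((k : ℝ))]
        · exact summable_sum (fun s _ => hsummand s)
    _ = C0 := hC0def.symm
    _ ≤ C0 + 1 := by linarith
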